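/- arXiv:1704.03972 — 2 statements merged into one kernel-verified Lean document; each statement's English description precedes it below -/
import Mathlib

section
/- Let T₁, …, T_m : ℚ^k → ℚ^k be affine maps and u₁, …, u_{m+1} ∈ ℚ^k vectors with u_{i+1} = T_i(u_i) for each i. Let H ⊆ ℚ^k be an affine subspace with u_{m+1} ∉ H and m ≥ dim(H) + 2. Then there exist indices 1 ≤ j₁ < j₂ < … < j_n ≤ m with n ≤ dim(H) + 1 such that T_{j_n}(T_{j_{n-1}}(⋯ T_{j_1}(u₁)⋯)) ∉ H. -/
private lemma foldl_mul_aux {k m : ℕ} (M : Fin m → Matrix (Fin k) (Fin k) ℚ) :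
    ∀ (L : List (Fin m)) (N P : Matrix (Fin k) (Fin k) ℚ),
      L.foldl (fun A i => M i * A) (N * P) = (L.foldl (fun A i => M i * A) N) * P := by
  intro L
  induction L with
  | nil => intro N P; rfl
  | cons i rest ih =>
    intro N P
    simp only [List.foldl_cons]
    rw [← mul_assoc, ih]

private lemma foldl_sub_aux {k m : ℕ} (M : Fin m → Matrix (Fin k) (Fin k) ℚ)
    (b : Fin m → Fin k → ℚ) (T : Fin m → (Fin k → ℚ) → (Fin k → ℚ))
    (hT : ∀ i x, T i x = (M i).mulVec x + b i) :
    ∀ (L : List (Fin m)) (x y : Fin k → ℚ),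
      L.foldl (fun x i => T i x) x - L.foldl (fun x i => T i x) y
        = (L.foldl (fun A i => M i * A) 1).mulVec (x - y) := by
  intro L
  induction L with
  | nil => intro x y; simp [Matrix.one_mulVec]
  | cons i rest ih =>
    intro x y
    simp only [List.foldl_cons]
    rw [ih (T i x) (T i y)]
    have h1 : T i x - T i y = (M i).mulVec (x - y) := by
      rw [hT, hT, Matrix.mulVec_sub]
      abel
    rw [h1, Matrix.mulVec_mulVec]
    congr 1
    have := foldl_mul_aux M rest 1 (M i)
    rw [one_mul] at this
    rw [← this, mul_one]

theorem stmt_1 (k m : ℕ)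
    (M : Fin m → Matrix (Fin k) (Fin k) ℚ) (b : Fin m → Fin k → ℚ)
    (T : Fin m → (Fin k → ℚ) → (Fin k → ℚ))
    (hT : ∀ i x, T i x = (M i).mulVec x + b i)
    (u : Fin (m + 1) → Fin k → ℚ)
    (hu : ∀ i : Fin m, u i.succ = T i (u i.castSucc))
    (H : Set (Fin k → ℚ)) (a : Fin k → ℚ) (V : Submodule ℚ (Fin k → ℚ))
    (hH : H = {x | x - a ∈ V})
    (hnot : u (Fin.last m) ∉ H)
    (hm : m ≥ Module.finrank ℚ V + 2) :
    ∃ n : ℕ, ∃ j : Fin n → Fin m, StrictMono j ∧ n ≤ Module.finrank ℚ V + 1 ∧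
      (List.ofFn j).foldl (fun x i => T i x) (u 0) ∉ H := by
  by_contra hcon
  push_neg at hcon
  set d := Module.finrank ℚ V with hd
  -- any short increasing composition lands in H
  have hmem : ∀ L : List (Fin m), L.Chain' (· < ·) → L.length ≤ d + 1 →
      L.foldl (fun x i => T i x) (u 0) ∈ H := by
    intro L hL hlen
    have hp : L.Pairwise (· < ·) := List.isChain_iff_pairwise.mp hL
    have hsm : StrictMono L.get := fun i j hij => List.pairwise_iff_get.mp hp i j hij
    have := hcon L.length L.get hsm hlen
    rwa [List.ofFn_get] at this
  have hu0 : u 0 - a ∈ V := by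
    have := hmem [] List.isChain_nil (by simp)
    rw [hH] at this
    simpa using this
  -- main claim: every increasing composition lands in H
  have key : ∀ t (L : List (Fin m)), L.length = t → L.Chain' (· < ·) →
      L.foldl (fun x i => T i x) (u 0) - u 0 ∈ V := by
    intro t
    induction t using Nat.strong_induction_on with
    | _ t IH =>
    intro L hlen hL
    by_cases ht : t ≤ d + 1
    · have h1 := hmem L hL (by omega)
      rw [hH] at h1
      have h2 : L.foldl (fun x i => T i x) (u 0) - u 0
          = (L.foldl (fun x i => T i x) (u 0) - a) - (u 0 - a) := by abel
      rw [h2]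
      exact sub_mem h1 hu0
    · push_neg at ht
      have hIH : ∀ L' : List (Fin m), L'.Sublist L → L'.length < t →
          L'.foldl (fun x i => T i x) (u 0) - u 0 ∈ V := by
        intro L' hsub hlt
        exact IH L'.length hlt L' rfl (List.IsChain.sublist hL hsub)
      set q : List (Fin m) → (Fin k → ℚ) :=
        fun L' => L'.foldl (fun x i => T i x) (u 0) - u 0 with hq
      set U : ℕ → Submodule ℚ (Fin k → ℚ) :=
        fun r => Submodule.span ℚ (q '' {L' | L'.Sublist (L.take r)}) with hU
      have hUmono : ∀ r, U r ≤ U (r + 1) := by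
        intro r
        apply Submodule.span_mono
        apply Set.image_mono
        intro L' hL'
        exact hL'.trans (by
          have : L.take r = (L.take (r+1)).take r := by
            rw [List.take_take]; congr 1; omega
          rw [this]; exact List.take_sublist _ _)
      have hUV : ∀ r, r < t → U r ≤ V := by
        intro r hr
        rw [hU]
        apply Submodule.span_le.mpr
        rintro x ⟨L', hL', rfl⟩
        have hsub : L'.Sublist L := hL'.trans (List.take_sublist _ _)
        have hlt : L'.length < t := by
          have h1 : L'.length ≤ (L.take r).length := hL'.length_le
          have h2 : (L.take r).length ≤ r := by simp
          omega
        exact hIH L' hsub hlt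
      have pigeon : ∃ r, r + 2 ≤ t ∧ U r = U (r + 1) := by
        by_contra hpg
        push_neg at hpg
        have hrank : ∀ r, r + 1 ≤ t → r ≤ Module.finrank ℚ (U r) := by
          intro r
          induction r with
          | zero => intro _; exact Nat.zero_le _
          | succ r ihr =>
            intro hr
            have h1 : U r < U (r + 1) :=
              lt_of_le_of_ne (hUmono r) (hpg r (by omega))
            have h2 := Submodule.finrank_lt_finrank_of_lt h1
            have h3 := ihr (by omega)
            omega
        have h1 : t - 1 ≤ Module.finrank ℚ (U (t - 1)) := hrank (t - 1) (by omega)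
        have h2 : Module.finrank ℚ (U (t - 1)) ≤ d :=
          Submodule.finrank_mono (hUV (t - 1) (by omega))
        omega
      obtain ⟨r, hr2, hUeq⟩ := pigeon
      have ht0 : 0 < t := by omega
      set tl := L.drop (r + 1) with htl
      have hdecomp : L.take (r + 1) ++ tl = L := List.take_append_drop _ _
      have hq1 : q (L.take (r + 1)) ∈ U r := by
        rw [hUeq, hU]
        exact Submodule.subset_span ⟨L.take (r + 1), List.Sublist.refl _, rfl⟩
      set A := tl.foldl (fun A i => M i * A) (1 : Matrix (Fin k) (Fin k) ℚ) with hA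
      have hf : ∀ x y : Fin k → ℚ,
          tl.foldl (fun x i => T i x) x - tl.foldl (fun x i => T i x) y
            = A.mulVec (x - y) := fun x y => foldl_sub_aux M b T hT tl x y
      have htl_sub : tl.Sublist L := by
        rw [htl]; exact List.drop_sublist _ _
      have htl_len : tl.length < t := by
        rw [htl]; rw [List.length_drop]; omega
      have hdropsub : tl.Sublist (L.drop r) := by
        rw [htl]
        have : L.drop (r + 1) = List.drop 1 (L.drop r) := by
          rw [List.drop_drop]
        rw [this]
        exact List.drop_sublist _ _
      -- image of U r under mulVecLin A is inside V
      have himg : Submodule.map (Matrix.mulVecLin A) (U r) ≤ V := by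
        rw [hU, Submodule.map_span]
        apply Submodule.span_le.mpr
        rintro x ⟨_, ⟨L', hL', rfl⟩, rfl⟩
        have hcat : (L' ++ tl).Sublist L := by
          have h1 : (L' ++ tl).Sublist (L.take r ++ L.drop r) :=
            List.Sublist.append hL' hdropsub
          rwa [List.take_append_drop] at h1
        have hcatlen : (L' ++ tl).length < t := by
          rw [List.length_append]
          have h1 : L'.length ≤ (L.take r).length := hL'.length_le
          have h2 : (L.take r).length ≤ r := by simp
          have h3 : tl.length = L.length - (r + 1) := by
            rw [htl, List.length_drop]
          omega
        have hval : Matrix.mulVecLin A (q L')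
            = q (L' ++ tl) - q tl := by
          simp only [Matrix.mulVecLin_apply, hq]
          rw [← hf]
          rw [List.foldl_append]
          abel
        rw [hval]
        exact sub_mem (hIH (L' ++ tl) hcat hcatlen) (hIH tl htl_sub htl_len)
      have hmain : Matrix.mulVecLin A (q (L.take (r + 1))) ∈ V :=
        himg ⟨_, hq1, rfl⟩
      have hqtl : q tl ∈ V := hIH tl htl_sub htl_len
      have hfinal : q L = Matrix.mulVecLin A (q (L.take (r + 1))) + q tl := by
        simp only [Matrix.mulVecLin_apply, hq]
        rw [← hf]
        conv_lhs => rw [← hdecomp]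
        rw [List.foldl_append]
        abel
      show q L ∈ V
      rw [hfinal]
      exact add_mem hmain hqtl
  -- the full composition equals u (last m)
  have hfull : ∀ i : Fin (m + 1),
      u i = ((List.ofFn (fun i : Fin m => i)).take i.val).foldl
        (fun x i => T i x) (u 0) := by
    intro i
    induction i using Fin.induction with
    | zero => simp
    | succ i ihi =>
      rw [hu i]
      have h1 : (i.succ : Fin (m+1)).val = i.val + 1 := rfl
      have h2 : (i.castSucc : Fin (m+1)).val = i.val := rfl
      rw [h1]
      have h3 : (List.ofFn (fun i : Fin m => i)).take (i.val + 1)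
          = (List.ofFn (fun i : Fin m => i)).take i.val ++ [i] := by
        rw [List.take_succ]
        congr 1
        rw [List.getElem?_ofFn]
        simp [List.ofFnNthVal, i.isLt]
      rw [h3, List.foldl_append]
      simp only [List.foldl_cons, List.foldl_nil]
      simp only [Fin.coe_castSucc] at ihi
      rw [ihi]
  have hlast := hfull (Fin.last m)
  have h4 : ((List.ofFn (fun i : Fin m => i)).take (Fin.last m).val)
      = List.ofFn (fun i : Fin m => i) := by
    apply List.take_of_length_le
    simp [Fin.last]
  rw [h4] at hlast
  have hchain : (List.ofFn (fun i : Fin m => i)).Chain' (· < ·) := by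
    show List.IsChain _ _
    rw [List.isChain_iff_pairwise, List.pairwise_iff_get]
    intro i j hij
    simpa [List.get_ofFn] using hij
  have := key (List.ofFn (fun i : Fin m => i)).length
      (List.ofFn (fun i : Fin m => i)) rfl hchain
  rw [← hlast] at this
  apply hnot
  rw [hH]
  have h5 : u (Fin.last m) - a = (u (Fin.last m) - u 0) + (u 0 - a) := by abel
  show u (Fin.last m) - a ∈ V
  rw [h5]
  exact add_mem this hu0
end

section
/- Fix affine maps T₀, T₁, …, T_{m-1}, R : ℚ^n → ℚ^n and an affine subspace H ⊆ ℚ^n with dim(H) ≤ n − 1. Suppose R(T_{m-1}(⋯T₁(T₀(u))⋯)) ∉ H and m − 1 ≥ n + 1. Then there exist indices 1 ≤ j₁ < ⋯ < j_t ≤ m − 1 with t ≤ n such that R(T_{j_t}(⋯T_{j_1}(T₀(u))⋯)) ∉ H. -/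
set_option maxHeartbeats 1000000

namespace Stmt12Aux

variable {n m : ℕ}

/-- Homogenized version of the affine map `x ↦ Mi.mulVec x + bi`, acting on `ℚ^n × ℚ`. -/
noncomputable def Tl (Mi : Matrix (Fin n) (Fin n) ℚ) (bi : Fin n → ℚ) :
    ((Fin n → ℚ) × ℚ) →ₗ[ℚ] ((Fin n → ℚ) × ℚ) :=
  (Mi.mulVecLin.comp (LinearMap.fst ℚ (Fin n → ℚ) ℚ) +
    (LinearMap.snd ℚ (Fin n → ℚ) ℚ).smulRight bi).prod (LinearMap.snd ℚ (Fin n → ℚ) ℚ)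

lemma Tl_apply (Mi : Matrix (Fin n) (Fin n) ℚ) (bi : Fin n → ℚ) (p : (Fin n → ℚ) × ℚ) :
    Tl Mi bi p = (Mi.mulVec p.1 + p.2 • bi, p.2) := rfl

lemma Tl_hom (Mi : Matrix (Fin n) (Fin n) ℚ) (bi : Fin n → ℚ) (x : Fin n → ℚ) :
    Tl Mi bi (x, 1) = (Mi.mulVec x + bi, 1) := by
  simp [Tl_apply]

noncomputable def W (M : Fin m → Matrix (Fin n) (Fin n) ℚ) (b : Fin m → Fin n → ℚ)
    (x0 : Fin n → ℚ) : ℕ → Submodule ℚ ((Fin n → ℚ) × ℚ)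
  | 0 => Submodule.span ℚ {((x0, 1) : (Fin n → ℚ) × ℚ)}
  | (k+1) => W M b x0 k ⊔ (if h : k + 1 < m then
      Submodule.map (Tl (M ⟨k+1, h⟩) (b ⟨k+1, h⟩)) (W M b x0 k) else ⊥)


lemma W_succ (M : Fin m → Matrix (Fin n) (Fin n) ℚ) (b : Fin m → Fin n → ℚ)
    (x0 : Fin n → ℚ) (k : ℕ) : W M b x0 (k+1) = W M b x0 k ⊔ (if h : k + 1 < m then
      Submodule.map (Tl (M ⟨k+1, h⟩) (b ⟨k+1, h⟩)) (W M b x0 k) else ⊥) := rfl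

lemma W_zero (M : Fin m → Matrix (Fin n) (Fin n) ℚ) (b : Fin m → Fin n → ℚ)
    (x0 : Fin n → ℚ) : W M b x0 0 = Submodule.span ℚ {((x0, 1) : (Fin n → ℚ) × ℚ)} := rfl

def Reach (M : Fin m → Matrix (Fin n) (Fin n) ℚ) (b : Fin m → Fin n → ℚ)
    (x0 : Fin n → ℚ) (k t : ℕ) : Set ((Fin n → ℚ) × ℚ) :=
  {p | ∃ l : List (Fin m), l.Pairwise (· < ·) ∧ (∀ i ∈ l, 1 ≤ i.1 ∧ i.1 ≤ k) ∧
    l.length ≤ t ∧ p = (l.foldl (fun x i => (M i).mulVec x + b i) x0, 1)}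

lemma Reach_mono (M : Fin m → Matrix (Fin n) (Fin n) ℚ) (b : Fin m → Fin n → ℚ)
    (x0 : Fin n → ℚ) {k k' t t' : ℕ} (hk : k ≤ k') (ht : t ≤ t') :
    Reach M b x0 k t ⊆ Reach M b x0 k' t' := by
  rintro p ⟨l, h1, h2, h3, h4⟩
  exact ⟨l, h1, fun i hi => ⟨(h2 i hi).1, le_trans (h2 i hi).2 hk⟩, le_trans h3 ht, h4⟩

lemma W_le_span (M : Fin m → Matrix (Fin n) (Fin n) ℚ) (b : Fin m → Fin n → ℚ)
    (x0 : Fin n → ℚ) : ∀ k, W M b x0 k ≤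
      Submodule.span ℚ (Reach M b x0 k (Module.finrank ℚ (W M b x0 k) - 1)) := by
  intro k
  induction k with
  | zero =>
    rw [W_zero]
    apply Submodule.span_mono
    rintro p rfl
    exact ⟨[], by simp, by simp, by simp, rfl⟩
  | succ k ih =>
    by_cases h : k + 1 < m
    · by_cases h2 : Submodule.map (Tl (M ⟨k+1, h⟩) (b ⟨k+1, h⟩)) (W M b x0 k) ≤ W M b x0 k
      · have : W M b x0 (k+1) = W M b x0 k := by
          rw [W_succ, dif_pos h, sup_eq_left.mpr h2]
        rw [this]
        exact ih.trans (Submodule.span_mono (Reach_mono M b x0 (Nat.le_succ k) le_rfl))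
      · have hWk : W M b x0 k ≠ ⊥ := fun hbot => h2 (by simp [hbot])
        have hr1 : 1 ≤ Module.finrank ℚ (W M b x0 k) := by
          rw [Nat.one_le_iff_ne_zero]
          intro h0
          exact hWk (Submodule.finrank_eq_zero.mp h0)
        have hmaple : Submodule.map (Tl (M ⟨k+1, h⟩) (b ⟨k+1, h⟩)) (W M b x0 k) ≤
            W M b x0 (k+1) := by
          rw [W_succ, dif_pos h]; exact le_sup_right
        have hle : W M b x0 k ≤ W M b x0 (k+1) := by
          rw [W_succ]; exact le_sup_left
        have hlt : W M b x0 k < W M b x0 (k+1) := by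
          refine lt_of_le_of_ne hle (fun heq => h2 ?_)
          exact hmaple.trans (le_of_eq heq.symm)
        have hrlt : Module.finrank ℚ (W M b x0 k) < Module.finrank ℚ (W M b x0 (k+1)) :=
          Submodule.finrank_lt_finrank_of_lt hlt
        have hWs : W M b x0 (k+1) = W M b x0 k ⊔
            Submodule.map (Tl (M ⟨k+1, h⟩) (b ⟨k+1, h⟩)) (W M b x0 k) := by
          rw [W_succ, dif_pos h]
        refine le_trans hWs.le (sup_le ?_ ?_)
        · exact ih.trans (Submodule.span_mono (Reach_mono M b x0 (Nat.le_succ k) (by omega)))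
        · refine le_trans (Submodule.map_mono ih) ?_
          rw [Submodule.map_span]
          apply Submodule.span_mono
          rintro p ⟨q, ⟨l, hl1, hl2, hl3, rfl⟩, rfl⟩
          refine ⟨l ++ [⟨k+1, h⟩], ?_, ?_, ?_, ?_⟩
          · rw [List.pairwise_append]
            refine ⟨hl1, by simp, ?_⟩
            intro a ha c hc
            rw [List.mem_singleton] at hc
            subst hc
            exact Fin.mk_lt_mk.mpr (by have := (hl2 a ha).2; omega)
          · intro i hi
            rw [List.mem_append] at hi
            rcases hi with hi | hi
            · exact ⟨(hl2 i hi).1, by have := (hl2 i hi).2; omega⟩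
            · rw [List.mem_singleton] at hi; subst hi; simp
          · simp only [List.length_append, List.length_singleton]
            omega
          · rw [List.foldl_append, Tl_hom]
            simp
    · have : W M b x0 (k+1) = W M b x0 k := by
        rw [W_succ, dif_neg h, sup_bot_eq]
      rw [this]
      exact ih.trans (Submodule.span_mono (Reach_mono M b x0 (Nat.le_succ k) le_rfl))


lemma foldl_take_mem_W {m' : ℕ} (M : Fin (m'+1) → Matrix (Fin n) (Fin n) ℚ)
    (b : Fin (m'+1) → Fin n → ℚ) (x0 : Fin n → ℚ) :
    ∀ k, k ≤ m' →
      ((((List.finRange m').take k).foldl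
          (fun x i => (M i.succ).mulVec x + b i.succ) x0), (1:ℚ)) ∈ W M b x0 k := by
  intro k
  induction k with
  | zero =>
    intro _
    rw [W_zero]
    simpa using Submodule.mem_span_singleton_self _
  | succ k ih =>
    intro hk
    have hk' : k < m' := by omega
    have hget : (List.finRange m')[k]? = some ⟨k, hk'⟩ := by
      rw [List.getElem?_eq_getElem (by simpa using hk'), List.getElem_finRange]
      rfl
    have htake : (List.finRange m').take (k+1) =
        (List.finRange m').take k ++ [⟨k, hk'⟩] := by
      rw [List.take_succ, hget]; rfl
    have hsucc : Fin.succ (⟨k, hk'⟩ : Fin m') = (⟨k+1, by omega⟩ : Fin (m'+1)) := rfl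
    rw [htake, List.foldl_append]
    simp only [List.foldl_cons, List.foldl_nil, hsucc]
    have hmem := ih (by omega)
    have h1 : k + 1 < m' + 1 := by omega
    have : Tl (M ⟨k+1, h1⟩) (b ⟨k+1, h1⟩)
        ((((List.finRange m').take k).foldl
          (fun x i => (M i.succ).mulVec x + b i.succ) x0), (1:ℚ)) ∈
        Submodule.map (Tl (M ⟨k+1, h1⟩) (b ⟨k+1, h1⟩)) (W M b x0 k) :=
      Submodule.mem_map_of_mem hmem
    rw [Tl_hom] at this
    have hle : Submodule.map (Tl (M ⟨k+1, h1⟩) (b ⟨k+1, h1⟩)) (W M b x0 k) ≤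
        W M b x0 (k+1) := by
      rw [W_succ, dif_pos h1]; exact le_sup_right
    exact hle this

end Stmt12Aux

theorem stmt_12 (n m : ℕ)
    (M : Fin m → Matrix (Fin n) (Fin n) ℚ) (b : Fin m → Fin n → ℚ)
    (T : Fin m → (Fin n → ℚ) → (Fin n → ℚ))
    (hT : ∀ i x, T i x = (M i).mulVec x + b i)
    (MR : Matrix (Fin n) (Fin n) ℚ) (bR : Fin n → ℚ)
    (R : (Fin n → ℚ) → (Fin n → ℚ)) (hR : ∀ x, R x = MR.mulVec x + bR)
    (H : Set (Fin n → ℚ)) (a : Fin n → ℚ) (V : Submodule ℚ (Fin n → ℚ))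
    (hH : H = {x | x - a ∈ V}) (hdim : Module.finrank ℚ V ≤ n - 1)
    (u : Fin n → ℚ)
    (hm : m - 1 ≥ n + 1)
    (hnot : R ((List.finRange m).foldl (fun x i => T i x) u) ∉ H) :
    ∃ t : ℕ, ∃ j : Fin t → Fin m, StrictMono j ∧ (∀ i, 1 ≤ (j i).val) ∧ t ≤ n ∧
      R ((List.ofFn j).foldl (fun x i => T i x) (T ⟨0, by omega⟩ u)) ∉ H := by
  obtain ⟨m', rfl⟩ : ∃ m', m = m' + 1 := ⟨m - 1, by omega⟩
  by_contra hcon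
  push_neg at hcon
  open Stmt12Aux in
  set x0 : Fin n → ℚ := (M ⟨0, Nat.succ_pos m'⟩).mulVec u + b ⟨0, Nat.succ_pos m'⟩ with hx0
  have hf : (fun (x : Fin n → ℚ) (i : Fin (m'+1)) => T i x) =
      (fun x i => (M i).mulVec x + b i) := by
    funext x i; exact hT i x
  set Rl : ((Fin n → ℚ) × ℚ) →ₗ[ℚ] (Fin n → ℚ) :=
    MR.mulVecLin.comp (LinearMap.fst ℚ (Fin n → ℚ) ℚ) +
      (LinearMap.snd ℚ (Fin n → ℚ) ℚ).smulRight (bR - a) with hRl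
  have hK : ∀ x : Fin n → ℚ, R x ∈ H ↔ ((x, (1:ℚ)) ∈ V.comap Rl) := by
    intro x
    simp only [hH, hR, Set.mem_setOf_eq, hRl, Submodule.mem_comap, LinearMap.add_apply,
      LinearMap.coe_comp, Function.comp_apply, LinearMap.fst_apply, LinearMap.snd_apply,
      LinearMap.smulRight_apply, Matrix.mulVecLin_apply, one_smul, add_sub_assoc]
  have hReach : Stmt12Aux.Reach M b x0 m' n ⊆ V.comap Rl := by
    rintro p ⟨l, hl1, hl2, hl3, rfl⟩
    have hsm : StrictMono l.get := fun i j hij => List.pairwise_iff_get.mp hl1 i j hij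
    have h1 : ∀ i, 1 ≤ (l.get i).val := fun i => (hl2 _ (l.get_mem i)).1
    have hmem := hcon l.length l.get hsm h1 hl3
    rw [List.ofFn_get, hf, show T ⟨0, by omega⟩ u = x0 from hT _ u] at hmem
    exact (hK _).mp hmem
  have hrle : Module.finrank ℚ (Stmt12Aux.W M b x0 m') - 1 ≤ n := by
    have h1 : Module.finrank ℚ (Stmt12Aux.W M b x0 m') ≤
        Module.finrank ℚ ((Fin n → ℚ) × ℚ) := Submodule.finrank_le _
    have h2 : Module.finrank ℚ ((Fin n → ℚ) × ℚ) = n + 1 := by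
      simp [Module.finrank_prod]
    omega
  have hWK : Stmt12Aux.W M b x0 m' ≤ V.comap Rl :=
    (Stmt12Aux.W_le_span M b x0 m').trans
      (le_trans (Submodule.span_mono (Stmt12Aux.Reach_mono M b x0 le_rfl hrle))
        (Submodule.span_le.mpr hReach))
  have hfull := Stmt12Aux.foldl_take_mem_W M b x0 m' le_rfl
  rw [List.take_of_length_le (by simp)] at hfull
  have hEq : (List.finRange (m'+1)).foldl (fun x i => T i x) u =
      (List.finRange m').foldl (fun x i => (M i.succ).mulVec x + b i.succ) x0 := by
    rw [hf, List.finRange_succ, List.foldl_cons, List.foldl_map]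
    rfl
  exact hnot (by rw [hEq]; exact (hK _).mpr (hWK hfull))
end
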